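/- Let D_{2m} = ⟨a, b : a^m = b^2 = 1, bab^{-1} = a^{-1}⟩ with m > 2 even. Then the commuting graph of D_{2m} is isomorphic to K_{m-2} ⊔ (m/2)·K_2, and its spectrum is {(-1) with multiplicity 3m/2 - 3, 1 with multiplicity m/2, (m - 3) with multiplicity 1}. -/

import Mathlib

open Polynomial

/-- The commuting graph of a group: vertices are non-central elements,
adjacent iff distinct and commuting. -/
def commGraph (G : Type*) [Group G] : SimpleGraph {x : G // x ∉ Subgroup.center G} where
  Adj x y := x ≠ y ∧ (x : G) * y = y * x
  symm := ⟨by rintro x y ⟨h1, h2⟩; exact ⟨h1.symm, h2.symm⟩⟩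
  loopless := ⟨by rintro x ⟨h, _⟩; exact h rfl⟩

/-- The characteristic polynomial (over ℝ) of the adjacency matrix of the
commuting graph of a finite group. -/
noncomputable def commCharpoly (G : Type*) [Group G] [Finite G] : Polynomial ℝ := by
  classical
  have : Fintype G := Fintype.ofFinite G
  exact (SimpleGraph.adjMatrix ℝ (commGraph G)).charpoly

/-- The disjoint union of `k` copies of the complete graph on `m` vertices. -/
def completeUnion (k m : ℕ) : SimpleGraph (Fin k × Fin m) where
  Adj x y := x ≠ y ∧ x.1 = y.1
  symm := ⟨by rintro x y ⟨h1, h2⟩; exact ⟨h1.symm, h2.symm⟩⟩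
  loopless := ⟨by rintro x ⟨h, _⟩; exact h rfl⟩

open Matrix SimpleGraph DihedralGroup

lemma eval_charpoly' {N : Type*} [Fintype N] [DecidableEq N] (A : Matrix N N ℝ) (x : ℝ) :
    A.charpoly.eval x = (Matrix.diagonal (fun _ => x) - A).det := by
  have hmap : (Matrix.charmatrix A).map (Polynomial.eval x) = Matrix.diagonal (fun _ => x) - A := by
    ext i j
    by_cases h : i = j
    · subst h; simp [Matrix.charmatrix_apply_eq]
    · simp [Matrix.charmatrix_apply_ne _ _ _ h, Matrix.diagonal_apply_ne _ h]
  rw [Matrix.charpoly, ← hmap]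
  exact (evalRingHom x).map_det _

lemma charpoly_top (N : ℕ) (hN : 1 ≤ N) :
    (SimpleGraph.adjMatrix ℝ (⊤ : SimpleGraph (Fin N))).charpoly
      = (X + 1) ^ (N - 1) * (X - C ((N : ℝ) - 1)) := by
  apply Polynomial.eq_of_infinite_eval_eq
  apply Set.Infinite.mono (s := {(-1 : ℝ)}ᶜ) ?_ ((Set.finite_singleton _).infinite_compl)
  intro x hx
  have hx1 : x + 1 ≠ 0 := by
    simp only [Set.mem_compl_iff, Set.mem_singleton_iff] at hx
    intro h; apply hx; linarith
  simp only [Set.mem_setOf_eq]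
  rw [eval_charpoly']
  have hM : Matrix.diagonal (fun _ : Fin N => x) - SimpleGraph.adjMatrix ℝ (⊤ : SimpleGraph (Fin N))
      = (x + 1) • (1 + Matrix.replicateCol Unit (fun _ => -(x+1)⁻¹) * Matrix.replicateRow Unit (fun _ => (1:ℝ))) := by
    ext i j
    by_cases h : i = j
    · subst h
      simp only [Matrix.sub_apply, Matrix.diagonal_apply_eq, SimpleGraph.adjMatrix_apply,
        SimpleGraph.top_adj, ne_eq, not_true_eq_false, if_false, sub_zero, Matrix.smul_apply,
        Matrix.add_apply, Matrix.one_apply_eq, Matrix.mul_apply, Matrix.replicateCol_apply,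
        Matrix.replicateRow_apply, Finset.univ_unique, Finset.sum_singleton, smul_eq_mul]
      field_simp
      ring
    · simp only [Matrix.sub_apply, Matrix.diagonal_apply_ne _ h, SimpleGraph.adjMatrix_apply,
        SimpleGraph.top_adj, ne_eq, h, not_false_eq_true, if_true, Matrix.smul_apply,
        Matrix.add_apply, Matrix.one_apply_ne h, Matrix.mul_apply, Matrix.replicateCol_apply,
        Matrix.replicateRow_apply, Finset.univ_unique, Finset.sum_singleton, smul_eq_mul]
      field_simp
      ring
  rw [hM, Matrix.det_smul, Matrix.det_one_add_replicateCol_mul_replicateRow]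
  have hd : (fun _ : Fin N => (1:ℝ)) ⬝ᵥ (fun _ => -(x+1)⁻¹) = -(N * (x+1)⁻¹) := by
    simp [dotProduct, Finset.sum_const]
  rw [hd]
  simp only [eval_mul, eval_pow, eval_add, eval_X, eval_one, eval_sub, eval_C, smul_eq_mul,
    Fintype.card_fin]
  have hNN : (x+1)^N = (x+1)^(N-1) * (x+1) := by
    conv_lhs => rw [show N = (N-1)+1 by omega]
    ring
  rw [hNN]
  field_simp
  ring

instance (k m : ℕ) : DecidableRel (completeUnion k m).Adj := fun x y => by
  unfold completeUnion; exact instDecidableAnd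

lemma charpoly_blockDiagonal {k : ℕ} {n' : Type*} [Fintype n'] [DecidableEq n']
    (M : Fin k → Matrix n' n' ℝ) :
    (Matrix.blockDiagonal M).charpoly = ∏ i, (M i).charpoly := by
  unfold Matrix.charpoly
  have h : (Matrix.blockDiagonal M).charmatrix = Matrix.blockDiagonal (fun i => (M i).charmatrix) := by
    ext ⟨i, o⟩ ⟨j, o'⟩
    rcases eq_or_ne o o' with rfl | ho
    · rcases eq_or_ne i j with rfl | hij
      · simp [Matrix.charmatrix_apply_eq, Matrix.blockDiagonal_apply_eq]
      · have : (⟨i, o⟩ : n' × Fin k) ≠ ⟨j, o⟩ := by simp [hij]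
        simp [Matrix.charmatrix_apply_ne _ _ _ this, Matrix.charmatrix_apply_ne _ _ _ hij,
          Matrix.blockDiagonal_apply_eq]
    · have : (⟨i, o⟩ : n' × Fin k) ≠ ⟨j, o'⟩ := by simp [ho]
      simp [Matrix.charmatrix_apply_ne _ _ _ this, Matrix.blockDiagonal_apply_ne _ _ _ ho]
  rw [h, Matrix.det_blockDiagonal]

lemma adj_completeUnion (k : ℕ) :
    SimpleGraph.adjMatrix ℝ (completeUnion k 2)
      = Matrix.reindex (Equiv.prodComm (Fin 2) (Fin k)) (Equiv.prodComm (Fin 2) (Fin k))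
        (Matrix.blockDiagonal (fun _ : Fin k => SimpleGraph.adjMatrix ℝ (⊤ : SimpleGraph (Fin 2)))) := by
  ext ⟨a, b⟩ ⟨c, d⟩
  simp only [SimpleGraph.adjMatrix_apply, Matrix.reindex_apply, Matrix.submatrix_apply,
    Equiv.prodComm_symm, Equiv.prodComm_apply, Prod.swap_prod_mk, Matrix.blockDiagonal_apply]
  rcases eq_or_ne a c with rfl | hac
  · simp only [if_pos rfl, SimpleGraph.adjMatrix_apply, SimpleGraph.top_adj]
    by_cases hbd : b = d
    · subst hbd; simp [completeUnion]
    · have hadj : (completeUnion k 2).Adj (a,b) (a,d) := ⟨by simp [hbd], rfl⟩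
      simp [hadj, hbd]
  · have hadj : ¬ (completeUnion k 2).Adj (a,b) (c,d) := fun h => hac h.2
    simp [hadj, hac]
lemma charpoly_completeUnion (k : ℕ) :
    (SimpleGraph.adjMatrix ℝ (completeUnion k 2)).charpoly = ((X + 1) * (X - 1)) ^ k := by
  rw [adj_completeUnion, Matrix.charpoly_reindex, charpoly_blockDiagonal]
  have h2 : (SimpleGraph.adjMatrix ℝ (⊤ : SimpleGraph (Fin 2))).charpoly = (X + 1) * (X - 1) := by
    rw [charpoly_top 2 (by norm_num)]
    norm_num
  rw [h2, Finset.prod_const, Finset.card_univ, Fintype.card_fin]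


variable {m n : ℕ}

lemma zmod_cast_inj [NeZero m] {a b : ℕ} (ha : a < m) (hb : b < m) :
    ((a : ZMod m) = (b : ZMod m)) ↔ a = b := by
  constructor
  · intro h
    have := congrArg ZMod.val h
    rwa [ZMod.val_natCast_of_lt ha, ZMod.val_natCast_of_lt hb] at this
  · rintro rfl; rfl

lemma zmod_neg_eq_self (hm : m = 2 * n) (hn : 1 ≤ n) (i : ZMod m) :
    -i = i ↔ i = 0 ∨ i = (n : ZMod m) := by
  haveI : NeZero m := ⟨by omega⟩
  constructor
  · intro h
    have h2 : i + i = 0 := by nth_rewrite 1 [← h]; rw [neg_add_cancel]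
    have h3 : ((i.val + i.val : ℕ) : ZMod m) = 0 := by
      push_cast [ZMod.natCast_val, ZMod.cast_id]
      exact h2
    have h4 : m ∣ i.val + i.val := (ZMod.natCast_eq_zero_iff _ _).mp h3
    have h5 : i.val < m := ZMod.val_lt i
    have : i.val = 0 ∨ i.val = n := by
      rcases h4 with ⟨c, hc⟩
      have hc2 : c < 2 := by nlinarith
      interval_cases c <;> omega
    rcases this with h6 | h6
    · left; rw [← ZMod.natCast_zmod_val i, h6, Nat.cast_zero]
    · right; rw [← ZMod.natCast_zmod_val i, h6]
  · have hnn : (n : ZMod m) + (n : ZMod m) = 0 := by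
      rw [← Nat.cast_add, show n + n = m by omega, ZMod.natCast_self]
    rintro (rfl | rfl)
    · simp
    · exact neg_eq_of_add_eq_zero_left hnn

lemma r_commute_sr_iff (hm : m = 2 * n) (hn : 1 ≤ n) (i j : ZMod m) :
    (r i * sr j = sr j * r i) ↔ i = 0 ∨ i = (n : ZMod m) := by
  rw [r_mul_sr, sr_mul_r, sr.injEq, sub_eq_add_neg, add_right_inj,
    ← zmod_neg_eq_self hm hn i]

lemma sr_commute_sr_iff (hm : m = 2 * n) (hn : 1 ≤ n) (i j : ZMod m) :
    (sr i * sr j = sr j * sr i) ↔ j = i ∨ j = i + (n : ZMod m) := by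
  rw [sr_mul_sr, sr_mul_sr, r.injEq]
  constructor
  · intro h
    have h2 : -(j - i) = j - i := by
      rw [neg_sub]; exact h.symm
    rcases (zmod_neg_eq_self hm hn _).mp h2 with h3 | h3
    · left; exact sub_eq_zero.mp h3
    · right; linear_combination h3
  · rintro (rfl | rfl)
    · ring_nf
    · have := (zmod_neg_eq_self hm hn (n : ZMod m)).mpr (Or.inr rfl)
      linear_combination -this

lemma sr_not_mem_center (hm2 : 2 < m) (i : ZMod m) :
    sr i ∉ Subgroup.center (DihedralGroup m) := by
  rw [Subgroup.mem_center_iff]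
  intro h
  have := h (r 1)
  rw [r_mul_sr, sr_mul_r, sr.injEq, sub_eq_add_neg, add_right_inj] at this
  have h2 : ((2 : ℕ) : ZMod m) = 0 := by
    push_cast
    linear_combination -this
  rw [ZMod.natCast_eq_zero_iff] at h2
  exact absurd (Nat.le_of_dvd (by norm_num) h2) (by omega)

lemma r_mem_center_iff (hm : m = 2 * n) (hn : 1 ≤ n) (hm2 : 2 < m) (i : ZMod m) :
    r i ∈ Subgroup.center (DihedralGroup m) ↔ i = 0 ∨ i = (n : ZMod m) := by
  rw [Subgroup.mem_center_iff]
  constructor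
  · intro h
    rw [← r_commute_sr_iff hm hn i 0]
    exact (h (sr 0)).symm
  · intro h g
    rcases g with j | j
    · rw [r_mul_r, r_mul_r, add_comm]
    · exact ((r_commute_sr_iff hm hn i j).mpr h).symm

def dihedralFwd (m n : ℕ) : (Fin (m - 2) ⊕ Fin n × Fin 2) → DihedralGroup m
  | .inl i => r ((if i.val < n - 1 then i.val + 1 else i.val + 2 : ℕ) : ZMod m)
  | .inr (j, k) => sr ((j.val + k.val * n : ℕ) : ZMod m)

def dihedralBwd (m n : ℕ) (hm : m = 2 * n) (hn : 2 ≤ n) :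
    DihedralGroup m → (Fin (m - 2) ⊕ Fin n × Fin 2)
  | .r i => .inl ⟨(if i.val < n then i.val - 1 else i.val - 2) % (m - 2),
      Nat.mod_lt _ (by omega)⟩
  | .sr j => .inr (⟨j.val % n, Nat.mod_lt _ (by omega)⟩,
      ⟨j.val / n % 2, Nat.mod_lt _ (by omega)⟩)

lemma rot_idx_bounds (hm : m = 2 * n) (hn : 2 ≤ n) (i : Fin (m - 2)) :
    (if i.val < n - 1 then i.val + 1 else i.val + 2) < m ∧
    (if i.val < n - 1 then i.val + 1 else i.val + 2) ≠ 0 ∧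
    (if i.val < n - 1 then i.val + 1 else i.val + 2) ≠ n := by
  have := i.isLt
  split_ifs <;> omega

lemma dihedralFwd_not_center (hm : m = 2 * n) (hn : 2 ≤ n)
    (x : Fin (m - 2) ⊕ Fin n × Fin 2) :
    dihedralFwd m n x ∉ Subgroup.center (DihedralGroup m) := by
  haveI : NeZero m := ⟨by omega⟩
  rcases x with i | ⟨j, k⟩
  · obtain ⟨h1, h2, h3⟩ := rot_idx_bounds hm hn i
    rw [dihedralFwd, r_mem_center_iff hm (by omega) (by omega)]
    rintro (h | h)
    · rw [show (0 : ZMod m) = ((0 : ℕ) : ZMod m) by simp, zmod_cast_inj h1 (by omega)] at h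
      exact h2 h
    · rw [zmod_cast_inj h1 (by omega)] at h
      exact h3 h
  · exact sr_not_mem_center (by omega) _

def dihedralEquiv (m n : ℕ) (hm : m = 2 * n) (hn : 2 ≤ n) :
    (Fin (m - 2) ⊕ Fin n × Fin 2) ≃
      {x : DihedralGroup m // x ∉ Subgroup.center (DihedralGroup m)} :=
  haveI : NeZero m := ⟨by omega⟩
  { toFun := fun x => ⟨dihedralFwd m n x, dihedralFwd_not_center hm hn x⟩
    invFun := fun x => dihedralBwd m n hm hn x.val
    left_inv := by
      rintro (i | ⟨j, k⟩)
      · obtain ⟨h1, h2, h3⟩ := rot_idx_bounds hm hn i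
        have hi := i.isLt
        simp only [dihedralFwd, dihedralBwd, ZMod.val_natCast_of_lt h1]
        congr 1
        apply Fin.ext
        have hiv : (if (if i.val < n - 1 then i.val + 1 else i.val + 2) < n
            then (if i.val < n - 1 then i.val + 1 else i.val + 2) - 1
            else (if i.val < n - 1 then i.val + 1 else i.val + 2) - 2) = i.val := by
          split_ifs <;> omega
        simp only [hiv]
        exact Nat.mod_eq_of_lt (by omega)
      · have hj := j.isLt
        have hk := k.isLt
        have hkn : k.val * n ≤ 1 * n := Nat.mul_le_mul_right n (by omega)
        have hlt : j.val + k.val * n < m := by omega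
        simp only [dihedralFwd, dihedralBwd, ZMod.val_natCast_of_lt hlt]
        congr 1
        have hmod : (j.val + k.val * n) % n = j.val := by
          rw [Nat.add_mul_mod_self_right, Nat.mod_eq_of_lt hj]
        have hdiv : (j.val + k.val * n) / n = k.val := by
          rw [Nat.add_mul_div_right _ _ (by omega : 0 < n), Nat.div_eq_of_lt hj, zero_add]
        refine Prod.ext (Fin.ext ?_) (Fin.ext ?_)
        · exact hmod
        · simp only [hdiv]
          exact Nat.mod_eq_of_lt hk
    right_inv := by
      rintro ⟨g | g, hg⟩
      · rw [r_mem_center_iff hm (by omega) (by omega)] at hg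
        push_neg at hg
        obtain ⟨hg1, hg2⟩ := hg
        have hv : g.val < m := ZMod.val_lt g
        have hv1 : g.val ≠ 0 := fun h => hg1 (by rwa [← ZMod.val_eq_zero])
        have hv2 : g.val ≠ n := by
          intro h
          apply hg2
          rw [← ZMod.natCast_zmod_val g, h]
        apply Subtype.ext
        simp only [dihedralBwd, dihedralFwd]
        have hin : (if g.val < n then g.val - 1 else g.val - 2) % (m - 2)
            = if g.val < n then g.val - 1 else g.val - 2 := by
          apply Nat.mod_eq_of_lt
          split_ifs <;> omega
        congr 1
        rw [hin]
        have : (if (if g.val < n then g.val - 1 else g.val - 2) < n - 1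
            then (if g.val < n then g.val - 1 else g.val - 2) + 1
            else (if g.val < n then g.val - 1 else g.val - 2) + 2) = g.val := by
          split_ifs <;> omega
        rw [this, ZMod.natCast_zmod_val]
      · apply Subtype.ext
        have hv : g.val < m := ZMod.val_lt g
        simp only [dihedralBwd, dihedralFwd]
        have hdiv2 : g.val / n < 2 := by
          rw [Nat.div_lt_iff_lt_mul (by omega : 0 < n)]
          omega
        congr 1
        have : g.val % n + g.val / n % 2 * n = g.val := by
          rw [Nat.mod_eq_of_lt hdiv2, Nat.mod_add_div']
        rw [this, ZMod.natCast_zmod_val] }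

lemma sr_shift (hm : m = 2 * n) (hn : 2 ≤ n) (j j' : Fin n) (k k' : Fin 2) :
    ((((j'.val + k'.val * n : ℕ) : ZMod m) = ((j.val + k.val * n : ℕ) : ZMod m) + ((n : ℕ) : ZMod m))
      ↔ (j' = j ∧ k' ≠ k)) := by
  haveI : NeZero m := ⟨by omega⟩
  have hj := j.isLt; have hj' := j'.isLt
  obtain ⟨kv, hkv⟩ := k; obtain ⟨kv', hkv'⟩ := k'
  rw [← Nat.cast_add]
  simp only [Fin.ext_iff, ne_eq, Fin.mk.injEq]
  interval_cases kv <;> interval_cases kv'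
  · rw [zmod_cast_inj (by omega) (by omega)]
    omega
  · rw [zmod_cast_inj (by omega) (by omega)]
    omega
  · have hr : ((j.val + 1 * n + n : ℕ) : ZMod m) = ((j.val : ℕ) : ZMod m) := by
      rw [show (j.val + 1 * n + n : ℕ) = j.val + m by omega, Nat.cast_add, ZMod.natCast_self,
        add_zero]
    rw [hr, zmod_cast_inj (by omega) (by omega)]
    omega
  · have hr : ((j.val + 1 * n + n : ℕ) : ZMod m) = ((j.val : ℕ) : ZMod m) := by
      rw [show (j.val + 1 * n + n : ℕ) = j.val + m by omega, Nat.cast_add, ZMod.natCast_self,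
        add_zero]
    rw [hr, zmod_cast_inj (by omega) (by omega)]
    omega

lemma not_r_commute (hm : m = 2 * n) (hn : 2 ≤ n) (i : Fin (m - 2)) (s : ZMod m) :
    haveI : NeZero m := ⟨by omega⟩
    ¬ (r (((if i.val < n - 1 then i.val + 1 else i.val + 2 : ℕ) : ZMod m)) * sr s
        = sr s * r (((if i.val < n - 1 then i.val + 1 else i.val + 2 : ℕ) : ZMod m))) := by
  haveI : NeZero m := ⟨by omega⟩
  intro hcomm
  obtain ⟨h1, h2, h3⟩ := rot_idx_bounds hm hn i
  rcases (r_commute_sr_iff hm (by omega) _ _).mp hcomm with h | h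
  · rw [show (0 : ZMod m) = ((0 : ℕ) : ZMod m) by simp, zmod_cast_inj h1 (by omega)] at h
    exact h2 h
  · rw [zmod_cast_inj h1 (by omega)] at h
    exact h3 h

lemma dihedralEquiv_coe (hm : m = 2 * n) (hn : 2 ≤ n) (x : Fin (m - 2) ⊕ Fin n × Fin 2) :
    (dihedralEquiv m n hm hn x : DihedralGroup m) = dihedralFwd m n x := rfl

def dihedralIso (m n : ℕ) (hm : m = 2 * n) (hn : 2 ≤ n) :
    ((⊤ : SimpleGraph (Fin (m - 2))) ⊕g completeUnion n 2) ≃g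
      commGraph (DihedralGroup m) := by
  haveI : NeZero m := ⟨by omega⟩
  refine ⟨dihedralEquiv m n hm hn, ?_⟩
  have hinj : Function.Injective (dihedralFwd m n) := fun a b h =>
    (dihedralEquiv m n hm hn).injective (Subtype.ext h)
  have hne : ∀ x y : Fin (m - 2) ⊕ Fin n × Fin 2,
      ((dihedralEquiv m n hm hn x ≠ dihedralEquiv m n hm hn y) ↔ x ≠ y) :=
    fun x y => (dihedralEquiv m n hm hn).injective.ne_iff
  rintro (i | ⟨j, k⟩) (i' | ⟨j', k'⟩)
  · -- rot-rot
    show ((_ ≠ _) ∧ _) ↔ _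
    rw [SimpleGraph.sum_adj]
    simp only [SimpleGraph.top_adj]
    rw [hne]
    constructor
    · rintro ⟨h1, _⟩
      intro h; apply h1; rw [h]
    · intro h
      refine ⟨fun hc => h (by injection hc), ?_⟩
      show dihedralFwd m n (.inl i) * dihedralFwd m n (.inl i')
          = dihedralFwd m n (.inl i') * dihedralFwd m n (.inl i)
      simp only [dihedralFwd, r_mul_r, add_comm]
  · -- rot-refl : both false
    show ((_ ≠ _) ∧ _) ↔ _
    rw [SimpleGraph.sum_adj]
    simp only [iff_false, not_and]
    intro _ hcomm
    exact not_r_commute hm hn i _ hcomm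
  · -- refl-rot
    show ((_ ≠ _) ∧ _) ↔ _
    rw [SimpleGraph.sum_adj]
    simp only [iff_false, not_and]
    intro _ hcomm
    exact not_r_commute hm hn i' _ hcomm.symm
  · -- refl-refl
    show ((_ ≠ _) ∧ _) ↔ _
    rw [SimpleGraph.sum_adj]
    rw [hne]
    have hcomm : (dihedralFwd m n (.inr (j, k)) * dihedralFwd m n (.inr (j', k'))
        = dihedralFwd m n (.inr (j', k')) * dihedralFwd m n (.inr (j, k)))
        ↔ (((j'.val + k'.val * n : ℕ) : ZMod m) = ((j.val + k.val * n : ℕ) : ZMod m) ∨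
           ((j'.val + k'.val * n : ℕ) : ZMod m)
             = ((j.val + k.val * n : ℕ) : ZMod m) + ((n : ℕ) : ZMod m)) := by
      simp only [dihedralFwd]
      exact sr_commute_sr_iff hm (by omega) _ _
    show ((Sum.inr (j, k) : Fin (m - 2) ⊕ Fin n × Fin 2) ≠ .inr (j', k')) ∧ _ ↔
      ((j, k) ≠ (j', k') ∧ j = j')
    simp only [dihedralEquiv_coe]
    rw [hcomm]
    have hnn : (Sum.inr (j, k) : Fin (m - 2) ⊕ Fin n × Fin 2) ≠ .inr (j', k') ↔
        (j, k) ≠ (j', k') := by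
      constructor
      · intro h hc; apply h; rw [hc]
      · intro h hc; apply h; injection hc
    rw [hnn]
    constructor
    · rintro ⟨h1, h2 | h2⟩
      · exfalso
        apply h1
        have : dihedralFwd m n (.inr (j', k')) = dihedralFwd m n (.inr (j, k)) := by
          simp only [dihedralFwd]; rw [h2]
        have := hinj this
        injection this with h3
        rw [h3]
      · exact ⟨h1, ((sr_shift hm hn j j' k k').mp h2).1.symm⟩
    · rintro ⟨h1, rfl⟩
      have hk : k' ≠ k := fun hc => h1 (by rw [hc])
      exact ⟨h1, Or.inr ((sr_shift hm hn j j k k').mpr ⟨rfl, hk⟩)⟩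

section assembly
open SimpleGraph Matrix

lemma charpoly_iso {V W : Type*} [Fintype V] [Fintype W] [DecidableEq V] [DecidableEq W]
    {G : SimpleGraph V} {H : SimpleGraph W} [DecidableRel G.Adj] [DecidableRel H.Adj]
    (e : G ≃g H) :
    (SimpleGraph.adjMatrix ℝ G).charpoly = (SimpleGraph.adjMatrix ℝ H).charpoly := by
  have hA : SimpleGraph.adjMatrix ℝ H
      = Matrix.reindex e.toEquiv e.toEquiv (SimpleGraph.adjMatrix ℝ G) := by
    ext i j
    have hadj : H.Adj i j ↔ G.Adj (e.symm i) (e.symm j) := by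
      conv_lhs => rw [show i = e (e.symm i) by simp, show j = e (e.symm j) by simp]
      exact e.map_adj_iff.symm.symm
    simp only [Matrix.reindex_apply, Matrix.submatrix_apply, SimpleGraph.adjMatrix_apply]
    exact if_congr hadj rfl rfl
  rw [hA, Matrix.charpoly_reindex]

lemma adjMatrix_sum {α β : Type*} [Fintype α] [Fintype β] [DecidableEq α] [DecidableEq β]
    (G : SimpleGraph α) (H : SimpleGraph β) [DecidableRel G.Adj] [DecidableRel H.Adj]
    [DecidableRel (G ⊕g H).Adj] :
    SimpleGraph.adjMatrix ℝ (G ⊕g H)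
      = Matrix.fromBlocks (SimpleGraph.adjMatrix ℝ G) 0 0 (SimpleGraph.adjMatrix ℝ H) := by
  ext (i | i) (j | j) <;>
    simp [Matrix.fromBlocks, SimpleGraph.adjMatrix_apply, SimpleGraph.sum_adj]

end assembly

/-- For `m > 2` even, the commuting graph of the dihedral group `D_{2m}` is isomorphic
to `K_{m-2} ⊔ (m/2)·K_2`, and its spectrum is `{(-1)^{3m/2-3}, 1^{m/2}, (m-3)^1}`. -/
theorem commGraph_dihedral_even (m : ℕ) (hm : 2 < m) (heven : Even m) :
    haveI : NeZero m := ⟨by omega⟩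
    Nonempty (commGraph (DihedralGroup m) ≃g
        ((⊤ : SimpleGraph (Fin (m - 2))) ⊕g completeUnion (m / 2) 2)) ∧
      commCharpoly (DihedralGroup m) =
        (X + 1) ^ (3 * m / 2 - 3) * (X - 1) ^ (m / 2) * (X - C ((m : ℝ) - 3)) := by
  classical
  haveI : NeZero m := ⟨by omega⟩
  obtain ⟨w, hw⟩ := heven
  have hm' : m = 2 * (m / 2) := by omega
  have hn : 2 ≤ m / 2 := by omega
  have iso := dihedralIso m (m / 2) hm' hn
  refine ⟨⟨iso.symm⟩, ?_⟩
  have hc : commCharpoly (DihedralGroup m)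
      = (SimpleGraph.adjMatrix ℝ (commGraph (DihedralGroup m))).charpoly := by
    unfold commCharpoly
    congr!
  rw [hc, charpoly_iso iso.symm, adjMatrix_sum, Matrix.charpoly_fromBlocks_zero₁₂,
    charpoly_top (m - 2) (by omega), charpoly_completeUnion]
  have hcast : ((m - 2 : ℕ) : ℝ) - 1 = (m : ℝ) - 3 := by
    rw [Nat.cast_sub (by omega)]
    push_cast
    ring
  rw [hcast, mul_pow, show (3 * m / 2 - 3) = (m - 2 - 1) + m / 2 by omega, pow_add]
  ring
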